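/- With the reparametrization Ψ(t,R,θ) = Φ(t, arsinh(R), θ) of the Fermi coordinates about a geodesic in ℍ³, the pullback metric Ψ*g is diagonal with Ψ*g(∂_t,∂_t) = 1+R², Ψ*g(∂_R,∂_R) = (1+R²)^{−1}, and Ψ*g(∂_θ,∂_θ) = R². -/

import Mathlib

open Real

/-- Fermi (polar) coordinates about the geodesic from `0` to `∞` in the upper
half-space model of `ℍ³`. -/
noncomputable def Phi (p : ℝ × ℝ × ℝ) : ℝ × ℝ × ℝ :=
  (Real.exp p.1 * Real.tanh p.2.1 * Real.cos p.2.2,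
   Real.exp p.1 * Real.tanh p.2.1 * Real.sin p.2.2,
   Real.exp p.1 / Real.cosh p.2.1)

/-- The reparametrised polar coordinates `Ψ(t,R,θ) = Φ(t, arsinh R, θ)`. -/
noncomputable def Psi (p : ℝ × ℝ × ℝ) : ℝ × ℝ × ℝ :=
  Phi (p.1, Real.arsinh p.2.1, p.2.2)

/-- The Euclidean dot product on `ℝ³`. -/
def dot3 (v w : ℝ × ℝ × ℝ) : ℝ := v.1 * w.1 + v.2.1 * w.2.1 + v.2.2 * w.2.2

set_option maxHeartbeats 1000000 in
theorem pullback_metric_in_reparametrised_polar_coordinates (t R θ : ℝ) :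
    let p := Psi (t, R, θ)
    let D := fderiv ℝ Psi (t, R, θ)
    -- the hyperbolic metric `g = t⁻² δᵢⱼ` at the point `p`:
    let g : (ℝ × ℝ × ℝ) → (ℝ × ℝ × ℝ) → ℝ := fun v w => (p.2.2)⁻¹ ^ 2 * dot3 v w
    g (D (1, 0, 0)) (D (1, 0, 0)) = 1 + R ^ 2 ∧
    g (D (0, 1, 0)) (D (0, 1, 0)) = (1 + R ^ 2)⁻¹ ∧
    g (D (0, 0, 1)) (D (0, 0, 1)) = R ^ 2 ∧
    g (D (1, 0, 0)) (D (0, 1, 0)) = 0 ∧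
    g (D (1, 0, 0)) (D (0, 0, 1)) = 0 ∧
    g (D (0, 1, 0)) (D (0, 0, 1)) = 0 := by
  intro p D g
  have h1R : (0:ℝ) < 1 + R ^ 2 := by positivity
  set s := Real.sqrt (1 + R ^ 2) with hs_def
  have hs0 : (0:ℝ) < s := Real.sqrt_pos.2 h1R
  have hs2 : s ^ 2 = 1 + R ^ 2 := Real.sq_sqrt h1R.le
  have hsne : s ≠ 0 := ne_of_gt hs0
  -- closed form for `Psi`
  have hPsi : Psi = fun q : ℝ × ℝ × ℝ =>
      (Real.exp q.1 * (q.2.1 / Real.sqrt (1 + q.2.1 ^ 2)) * Real.cos q.2.2,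
       Real.exp q.1 * (q.2.1 / Real.sqrt (1 + q.2.1 ^ 2)) * Real.sin q.2.2,
       Real.exp q.1 * (Real.sqrt (1 + q.2.1 ^ 2))⁻¹) := by
    funext q
    have hc : Real.cosh (Real.arsinh q.2.1) = Real.sqrt (1 + q.2.1 ^ 2) :=
      Real.cosh_arsinh _
    simp [Psi, Phi, Real.tanh_eq_sinh_div_cosh, Real.sinh_arsinh, hc, div_eq_mul_inv]
  -- projections
  set P₁ : (ℝ × ℝ × ℝ) →L[ℝ] ℝ := ContinuousLinearMap.fst ℝ ℝ (ℝ × ℝ) with hP₁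
  set P₂ : (ℝ × ℝ × ℝ) →L[ℝ] ℝ :=
    (ContinuousLinearMap.fst ℝ ℝ ℝ).comp (ContinuousLinearMap.snd ℝ ℝ (ℝ × ℝ)) with hP₂
  set P₃ : (ℝ × ℝ × ℝ) →L[ℝ] ℝ :=
    (ContinuousLinearMap.snd ℝ ℝ ℝ).comp (ContinuousLinearMap.snd ℝ ℝ (ℝ × ℝ)) with hP₃
  -- one-dimensional derivatives
  have hq : HasDerivAt (fun x : ℝ => Real.sqrt (1 + x ^ 2)) (R / s) R := by
    have h1 : HasDerivAt (fun x : ℝ => 1 + x ^ 2) (2 * R) R := by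
      simpa using ((hasDerivAt_pow 2 R).const_add 1)
    have h2 := h1.sqrt (by positivity)
    convert h2 using 1
    rw [← hs_def]
    field_simp
  have hw : HasDerivAt (fun x : ℝ => x / Real.sqrt (1 + x ^ 2)) ((s ^ 3)⁻¹) R := by
    have h2 := (hasDerivAt_id R).div hq (ne_of_gt hs0)
    refine h2.congr_deriv (Eq.symm ?_)
    rw [← hs_def]
    simp only [id_eq, one_mul]
    rw [eq_div_iff (by positivity)]
    field_simp
    linear_combination (-1 : ℝ) * hs2
  have hu : HasDerivAt (fun x : ℝ => (Real.sqrt (1 + x ^ 2))⁻¹) (-(R / s ^ 3)) R := by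
    have h2 := hq.inv (ne_of_gt hs0)
    refine h2.congr_deriv (Eq.symm ?_)
    rw [← hs_def]
    rw [neg_div, div_div]
    ring
  -- FDerivatives of scalar building blocks
  have hP₁d : HasFDerivAt (fun q : ℝ × ℝ × ℝ => q.1) P₁ (t, R, θ) := P₁.hasFDerivAt
  have hP₂d : HasFDerivAt (fun q : ℝ × ℝ × ℝ => q.2.1) P₂ (t, R, θ) := P₂.hasFDerivAt
  have hP₃d : HasFDerivAt (fun q : ℝ × ℝ × ℝ => q.2.2) P₃ (t, R, θ) := P₃.hasFDerivAt
  have hE : HasFDerivAt (fun q : ℝ × ℝ × ℝ => Real.exp q.1) (Real.exp t • P₁) (t, R, θ) :=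
    by have := (Real.hasDerivAt_exp t).comp_hasFDerivAt _ hP₁d; exact this
  have hV : HasFDerivAt (fun q : ℝ × ℝ × ℝ => q.2.1 / Real.sqrt (1 + q.2.1 ^ 2))
      ((s ^ 3)⁻¹ • P₂) (t, R, θ) := by have := hw.comp_hasFDerivAt _ hP₂d; exact this
  have hU : HasFDerivAt (fun q : ℝ × ℝ × ℝ => (Real.sqrt (1 + q.2.1 ^ 2))⁻¹)
      ((-(R / s ^ 3)) • P₂) (t, R, θ) := by have := hu.comp_hasFDerivAt _ hP₂d; exact this
  have hC : HasFDerivAt (fun q : ℝ × ℝ × ℝ => Real.cos q.2.2) ((-Real.sin θ) • P₃) (t, R, θ) :=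
    by have := (Real.hasDerivAt_cos θ).comp_hasFDerivAt _ hP₃d; exact this
  have hS : HasFDerivAt (fun q : ℝ × ℝ × ℝ => Real.sin q.2.2) ((Real.cos θ) • P₃) (t, R, θ) :=
    by have := (Real.hasDerivAt_sin θ).comp_hasFDerivAt _ hP₃d; exact this
  -- assemble
  have hEV := hE.mul hV
  have hf1 := hEV.mul hC
  have hf2 := hEV.mul hS
  have hf3 := hE.mul hU
  have hΨ := hf1.prodMk (hf2.prodMk hf3)
  have hfd := hΨ.fderiv
  simp only [Pi.mul_apply] at hfd
  rw [← hPsi] at hfd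
  set E := Real.exp t with hE_def
  have hEne : E ≠ 0 := (Real.exp_pos t).ne'
  have e1 : fderiv ℝ Psi (t, R, θ) (1, 0, 0)
      = (E * (R / s) * Real.cos θ, E * (R / s) * Real.sin θ, E * s⁻¹) := by
    rw [hfd]
    simp only [ContinuousLinearMap.prod_apply, ContinuousLinearMap.add_apply,
      ContinuousLinearMap.coe_smul', Pi.smul_apply, ContinuousLinearMap.coe_comp',
      Function.comp_apply, ContinuousLinearMap.coe_fst', ContinuousLinearMap.coe_snd',
      smul_eq_mul, hP₁, hP₂, hP₃, Prod.mk.injEq]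
    norm_num
    all_goals and_intros
    all_goals ring
  have e2 : fderiv ℝ Psi (t, R, θ) (0, 1, 0)
      = (E * (s ^ 3)⁻¹ * Real.cos θ, E * (s ^ 3)⁻¹ * Real.sin θ, -(E * R * (s ^ 3)⁻¹)) := by
    rw [hfd]
    simp only [ContinuousLinearMap.prod_apply, ContinuousLinearMap.add_apply,
      ContinuousLinearMap.coe_smul', Pi.smul_apply, ContinuousLinearMap.coe_comp',
      Function.comp_apply, ContinuousLinearMap.coe_fst', ContinuousLinearMap.coe_snd',
      smul_eq_mul, hP₁, hP₂, hP₃, Prod.mk.injEq]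
    norm_num
    all_goals and_intros
    all_goals ring
  have e3 : fderiv ℝ Psi (t, R, θ) (0, 0, 1)
      = (-(E * (R / s) * Real.sin θ), E * (R / s) * Real.cos θ, 0) := by
    rw [hfd]
    simp only [ContinuousLinearMap.prod_apply, ContinuousLinearMap.add_apply,
      ContinuousLinearMap.coe_smul', Pi.smul_apply, ContinuousLinearMap.coe_comp',
      Function.comp_apply, ContinuousLinearMap.coe_fst', ContinuousLinearMap.coe_snd',
      smul_eq_mul, hP₁, hP₂, hP₃, Prod.mk.injEq]
    norm_num
    simp [← hs_def]
  have hp' : p.2.2 = E / s := by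
    show (Psi (t, R, θ)).2.2 = E / s
    rw [hPsi]
    simp [← hs_def, ← hE_def, div_eq_mul_inv]
  have hpyth : Real.sin θ ^ 2 + Real.cos θ ^ 2 = 1 := Real.sin_sq_add_cos_sq θ
  have e1' : D (1, 0, 0) = (E * (R / s) * Real.cos θ, E * (R / s) * Real.sin θ, E * s⁻¹) := e1
  have e2' : D (0, 1, 0)
      = (E * (s ^ 3)⁻¹ * Real.cos θ, E * (s ^ 3)⁻¹ * Real.sin θ, -(E * R * (s ^ 3)⁻¹)) := e2
  have e3' : D (0, 0, 1) = (-(E * (R / s) * Real.sin θ), E * (R / s) * Real.cos θ, 0) := e3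
  clear e1 e2 e3 hfd hΨ hf1 hf2 hf3 hEV hE hV hU hC hS hq hw hu hP₁d hP₂d hP₃d hPsi
  clear hP₁ hP₂ hP₃
  clear P₁ P₂ P₃
  refine ⟨?_, ?_, ?_, ?_, ?_, ?_⟩
  all_goals
    simp only [g]
    rw [show p.2.2 = E / s from hp']
    simp only [e1', e2', e3', dot3]
    clear_value s E
    clear e1' e2' e3' hp' p D g
    field_simp
  all_goals try ring
  · linear_combination (R ^ 2) * hpyth
  · linear_combination (1 + R ^ 2) * hpyth
      - (s ^ 2 + 1 + R ^ 2) * hs2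
  · linear_combination (E ^ 2 * R ^ 2) * hpyth
  · linear_combination (R) * hpyth
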